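/- arXiv:2211.16146 — 2 statements merged into one kernel-verified Lean document; each statement's English description precedes it below -/
import Mathlib

section
/- The largest eigenvalue λ of the matrix M = [[1,2,0],[1,1,1],[1,1,0]] satisfies λ < 2.8313, and λ is the unique real root of its characteristic polynomial exceeding 2. -/
open Matrix

open Polynomial in
lemma charpoly_eq_aux (M : Matrix (Fin 3) (Fin 3) ℝ)
    (hM : M = !![1, 2, 0; 1, 1, 1; 1, 1, 0]) :
    M.charpoly = X^3 - 2*X^2 - 2*X - 1 := by
  subst hM
  rw [Matrix.charpoly, Matrix.det_fin_three]
  simp [charmatrix_apply, Matrix.diagonal, Matrix.vecHead, Matrix.vecTail, map_ofNat]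
  ring

/-- The largest eigenvalue `λ` of `M = [[1,2,0],[1,1,1],[1,1,0]]` satisfies
`λ < 2.8313`, and `λ` is the unique real root of the characteristic polynomial
of `M` exceeding `2`. -/
theorem automaton_matrix_eigenvalue_bound
    (M : Matrix (Fin 3) (Fin 3) ℝ)
    (hM : M = !![1, 2, 0; 1, 1, 1; 1, 1, 0]) :
    ∃ lam : ℝ,
      M.charpoly.IsRoot lam ∧
      (∀ x : ℝ, M.charpoly.IsRoot x → x ≤ lam) ∧
      2 < lam ∧ lam < 2.8313 ∧
      ∀ x : ℝ, M.charpoly.IsRoot x → 2 < x → x = lam := by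
  have hcp := charpoly_eq_aux M hM
  have hroot : ∀ x : ℝ, M.charpoly.IsRoot x ↔ x^3 - 2*x^2 - 2*x - 1 = 0 := by
    intro x; rw [hcp]; simp [Polynomial.IsRoot]
  have hcont : ContinuousOn (fun x : ℝ => x^3 - 2*x^2 - 2*x - 1) (Set.Icc 2 2.8313) := by
    fun_prop
  have h0 : (0:ℝ) ∈ Set.Icc ((2:ℝ)^3 - 2*2^2 - 2*2 - 1) ((2.8313:ℝ)^3 - 2*2.8313^2 - 2*2.8313 - 1) := by
    constructor <;> norm_num
  obtain ⟨lam, hlam, hval⟩ := intermediate_value_Icc (by norm_num) hcont h0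
  simp only at hval
  have h2 : (2:ℝ) ≤ lam := hlam.1
  have key : ∀ x : ℝ, x^3 - 2*x^2 - 2*x - 1 = 0 → 2 < x → x = lam := by
    intro x hx' hx2
    have heq : (x - lam) * (x^2 + x*lam + lam^2 - 2*x - 2*lam - 2) = 0 := by
      linear_combination hx' - hval
    have hQ : 0 < x^2 + x*lam + lam^2 - 2*x - 2*lam - 2 := by nlinarith
    rcases mul_eq_zero.1 heq with h | h
    · linarith [sub_eq_zero.1 h]
    · exact absurd h (ne_of_gt hQ)
  refine ⟨lam, (hroot lam).2 hval, ?_, ?_, ?_, fun x hx hx2 => key x ((hroot x).1 hx) hx2⟩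
  · intro x hx
    by_contra h
    push_neg at h
    have hx2 : 2 < x := lt_of_le_of_lt h2 h
    exact absurd (key x ((hroot x).1 hx) hx2) (ne_of_gt h)
  · have : lam ≠ 2 := by intro h; rw [h] at hval; norm_num at hval
    exact lt_of_le_of_ne h2 (Ne.symm this)
  · have : lam ≠ 2.8313 := by intro h; rw [h] at hval; norm_num at hval
    exact lt_of_le_of_ne hlam.2 this
end

section
/- In Z^2, if the vertices of a self-avoiding walk w separate the plane so that the component of Z^2 \ (vertices of w except B) containing the first vertex B is finite, then every self-avoiding walk extending the reverse of w has length at most |w| + (size of that finite component). -/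
open Filter Topology

/-- Two vertices of `ℤ²` are adjacent if they differ by a unit vector. -/
def LatAdj (u v : ℤ × ℤ) : Prop :=
  (u.1 - v.1).natAbs + (u.2 - v.2).natAbs = 1

/-- A self-avoiding walk of length `n` starting at the origin in `ℤ²`. -/
def IsSAW (n : ℕ) (w : Fin (n + 1) → ℤ × ℤ) : Prop :=
  w 0 = (0, 0) ∧ Function.Injective w ∧
    ∀ i : Fin n, LatAdj (w i.castSucc) (w i.succ)

/-- The number of self-avoiding walks of length `n` starting at the origin. -/
noncomputable def sawCount (n : ℕ) : ℕ :=
  Nat.card {w : Fin (n + 1) → ℤ × ℤ // IsSAW n w}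

/-- A self-avoiding walk of length `n` in `ℤ²` (arbitrary starting point). -/
def FreeSAW (n : ℕ) (w : Fin (n + 1) → ℤ × ℤ) : Prop :=
  Function.Injective w ∧ ∀ i : Fin n, LatAdj (w i.castSucc) (w i.succ)

/-- Reachability in `ℤ²` avoiding a set `S` of vertices. -/
def LatReach (S : Set (ℤ × ℤ)) : ℤ × ℤ → ℤ × ℤ → Prop :=
  Relation.ReflTransGen (fun a b => LatAdj a b ∧ a ∉ S ∧ b ∉ S)

/-- If the component of the first vertex `B` of a self-avoiding walk `w` in
`ℤ²` minus the other vertices of `w` is finite, then every self-avoiding walk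
extending the reverse of `w` has length at most `|w|` plus the size of that
component. -/
theorem finite_component_bounds_extension (m : ℕ)
    (w : Fin (m + 1) → ℤ × ℤ) (hw : FreeSAW m w)
    (B : ℤ × ℤ) (hB : B = w 0)
    (comp : Set (ℤ × ℤ))
    (hcomp : comp = {v | LatReach (Set.range w \ {B}) B v})
    (hfin : comp.Finite) :
    ∀ (n : ℕ) (e : Fin (n + 1) → ℤ × ℤ) (he : FreeSAW n e) (hmn : m ≤ n),
      (∀ i : Fin (m + 1), e ⟨(i : ℕ), by omega⟩ = w ⟨m - (i : ℕ), by omega⟩) →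
      n ≤ m + comp.ncard := by
  subst hB hcomp
  intro n e he hmn hext
  set S : Set (ℤ × ℤ) := Set.range w \ {w 0} with hS
  -- the vertex at index m of e is w 0
  have hem : e ⟨m, by omega⟩ = w 0 := by
    have h := hext ⟨m, by omega⟩
    simpa using h
  -- indices past m lie outside the range of w
  have hnotrange : ∀ j : Fin (n + 1), m < (j : ℕ) → e j ∉ Set.range w := by
    rintro j hj ⟨k, hk⟩
    have hkm : (k : ℕ) ≤ m := by omega
    have h1 : e ⟨m - (k : ℕ), by omega⟩ = w ⟨m - (m - (k : ℕ)), by omega⟩ :=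
      hext ⟨m - (k : ℕ), by omega⟩
    have hk' : (⟨m - (m - (k : ℕ)), by omega⟩ : Fin (m + 1)) = k := by
      ext; simp; omega
    rw [hk'] at h1
    have h2 : e ⟨m - (k : ℕ), by omega⟩ = e j := h1.trans hk
    have h3 := he.1 h2
    have : m - (k : ℕ) = (j : ℕ) := congrArg Fin.val h3
    omega
  have hnotS : ∀ j : ℕ, m ≤ j → ∀ hj : j ≤ n, e ⟨j, by omega⟩ ∉ S := by
    intro j hmj hj hmem
    rcases Nat.eq_or_lt_of_le hmj with h | h
    · subst h
      rw [hem] at hmem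
      exact hmem.2 rfl
    · exact hnotrange ⟨j, by omega⟩ h hmem.1
  have hreach : ∀ j : ℕ, m ≤ j → ∀ hj : j ≤ n,
      LatReach S (w 0) (e ⟨j, by omega⟩) := by
    intro j hmj
    induction j, hmj using Nat.le_induction with
    | base => intro hj; rw [hem]; exact Relation.ReflTransGen.refl
    | succ j hmj ih =>
      intro hj
      refine Relation.ReflTransGen.tail (ih (by omega)) ?_
      refine ⟨?_, hnotS j hmj (by omega), hnotS (j + 1) (by omega) hj⟩
      have := he.2 ⟨j, by omega⟩
      simpa [Fin.castSucc, Fin.succ] using this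
  -- count the vertices e (m + j)
  have hmem : ∀ j : Fin (n - m + 1),
      e ⟨m + (j : ℕ), by omega⟩ ∈ {v | LatReach S (w 0) v} := by
    intro j
    exact hreach (m + (j : ℕ)) (by omega) (by omega)
  have : Finite ({v | LatReach S (w 0) v} : Set (ℤ × ℤ)) := hfin.to_subtype
  have hinj : Function.Injective
      (fun j : Fin (n - m + 1) =>
        (⟨e ⟨m + (j : ℕ), by omega⟩, hmem j⟩ : {v | LatReach S (w 0) v})) := by
    intro a b hab
    have h1 : e ⟨m + (a : ℕ), by omega⟩ = e ⟨m + (b : ℕ), by omega⟩ :=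
      congrArg Subtype.val hab
    have h2 := he.1 h1
    have : m + (a : ℕ) = m + (b : ℕ) := congrArg Fin.val h2
    ext; omega
  have hcard : n - m + 1 ≤ Nat.card ({v | LatReach S (w 0) v} : Set (ℤ × ℤ)) := by
    calc n - m + 1 = Nat.card (Fin (n - m + 1)) := by simp
      _ ≤ _ := Nat.card_le_card_of_injective _ hinj
  rw [Nat.card_coe_set_eq] at hcard
  omega
end
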